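/- Let W be the graph product of cyclic groups determined by a labeled graph (Γ, m). For each vertex v_j, the centralizer of v_j in W is the special subgroup generated by the star S_j of v_j (i.e., by v_j together with its neighbors). -/

import Mathlib

set_option linter.unusedSectionVars false
set_option maxHeartbeats 1000000
open Monoid Subgroup

namespace GPAux
section Pushout
variable {ι : Type*} {H : Type*} {G : ι → Type*} [Group H] [∀ i, Group (G i)]
  (φ : ∀ i, H →* G i)

open Monoid.PushoutI Monoid.CoprodI Monoid.PushoutI.NormalWord

def lprod (l : List (Σ i, G i)) : PushoutI φ := (l.map fun x => of x.1 x.2).prod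

def Red (l : List (Σ i, G i)) : Prop :=
  (∀ x ∈ l, x.2 ∉ (φ x.1).range) ∧ l.Chain' (fun a b => a.1 ≠ b.1)

variable {φ}

@[simp] theorem lprod_nil : lprod φ [] = 1 := rfl

theorem lprod_cons (x : Σ i, G i) (l : List (Σ i, G i)) :
    lprod φ (x :: l) = of x.1 x.2 * lprod φ l := by
  simp [lprod]

theorem lprod_append (l₁ l₂ : List (Σ i, G i)) :
    lprod φ (l₁ ++ l₂) = lprod φ l₁ * lprod φ l₂ := by
  simp [lprod]

theorem lprod_concat (l : List (Σ i, G i)) (x : Σ i, G i) :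
    lprod φ (l ++ [x]) = lprod φ l * of x.1 x.2 := by
  simp [lprod_append, lprod_cons]

theorem red_chain_iff {l : List (Σ i, G i)} :
    l.Chain' (fun a b => a.1 ≠ b.1) ↔ (l.map Sigma.fst).Chain' (· ≠ ·) :=
  List.isChain_map Sigma.fst |>.symm

theorem red_of_fst_eq {l l' : List (Σ i, G i)} (h : Red φ l)
    (hmem : ∀ x ∈ l', x.2 ∉ (φ x.1).range) (hfst : l'.map Sigma.fst = l.map Sigma.fst) :
    Red φ l' := by
  refine ⟨hmem, ?_⟩
  rw [red_chain_iff, hfst, ← red_chain_iff]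
  exact h.2

theorem Red.toWord {l : List (Σ i, G i)} (h : Red φ l) :
    ∃ W : Word G, Monoid.PushoutI.Reduced φ W ∧ W.toList = l := by
  refine ⟨⟨l, fun x hx h1 => h.1 x hx (h1 ▸ (φ x.1).range.one_mem), h.2⟩, ?_, rfl⟩
  exact fun g hg => h.1 g hg

theorem lprod_eq_ofCoprodI {W : Word G} : ofCoprodI (W.prod) = lprod φ W.toList := by
  simp only [Word.prod, lprod, map_list_prod, List.map_map]
  congr 1

theorem indices_eq (hφ : ∀ i, Function.Injective (φ i)) {l₁ l₂ : List (Σ i, G i)}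
    (h₁ : Red φ l₁) (h₂ : Red φ l₂) (h : lprod φ l₁ = lprod φ l₂) :
    l₁.map Sigma.fst = l₂.map Sigma.fst := by
  classical
  obtain ⟨d⟩ := transversal_nonempty φ hφ
  obtain ⟨W₁, hW₁, rfl⟩ := h₁.toWord
  obtain ⟨W₂, hW₂, rfl⟩ := h₂.toWord
  obtain ⟨w₁, hw₁, hm₁⟩ := hW₁.exists_normalWord_prod_eq d
  obtain ⟨w₂, hw₂, hm₂⟩ := hW₂.exists_normalWord_prod_eq d
  rw [← hm₁, ← hm₂]
  rw [← lprod_eq_ofCoprodI, ← lprod_eq_ofCoprodI] at h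
  have : w₁ = w₂ := Monoid.PushoutI.NormalWord.prod_injective (by rw [hw₁, hw₂]; exact h)
  rw [this]

theorem not_in_range_of_set {d : Transversal φ} {i : ι} {g : G i}
    (hset : g ∈ d.set i) (hne : g ≠ 1) : g ∉ (φ i).range := by
  intro hr
  apply hne
  have h1 : (((d.compl i).equiv g).2 : G i) = g :=
    (Subgroup.IsComplement.equiv_snd_eq_self_iff_mem _ (Subgroup.one_mem _)).2 hset
  have h2 : (((d.compl i).equiv g).2 : G i) = 1 :=
    (Subgroup.IsComplement.coe_equiv_snd_eq_one_iff_mem _ (d.one_mem i)).2 hr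
  rw [← h1, h2]

theorem of_heq {i₀ : ι} (x : Σ i, G i) (h : x.1 = i₀) :
    of (φ := φ) x.1 x.2 = of i₀ (h ▸ x.2) := by
  rcases x with ⟨k, g⟩
  dsimp at h
  subst h
  rfl

theorem exists_decomp (hφ : ∀ i, Function.Injective (φ i)) (i₀ : ι) (p : PushoutI φ) :
    ∃ (a : G i₀) (l : List (Σ i, G i)), Red φ l ∧ (∀ x ∈ l.head?, x.1 ≠ i₀) ∧
      p = of i₀ a * lprod φ l := by
  classical
  obtain ⟨d⟩ := transversal_nonempty φ hφ
  have hp : (PushoutI.NormalWord.prod (d := d) (equiv p)) = p :=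
    (equiv (d := d)).symm_apply_apply p
  set w := equiv p with hw
  have hred : Red φ w.toList :=
    ⟨fun x hx => not_in_range_of_set (w.normalized x.1 x.2 hx) (w.toWord.ne_one x hx),
      w.toWord.chain_ne⟩
  have hprod : p = base φ w.head * lprod φ w.toList := by
    rw [← hp, PushoutI.NormalWord.prod, lprod_eq_ofCoprodI]
  rcases hl : w.toList with _ | ⟨x, l'⟩
  · refine ⟨φ i₀ w.head, [], ⟨by simp, List.isChain_nil⟩, by simp, ?_⟩
    rw [hprod, hl, of_apply_eq_base]
  · rw [hl] at hred hprod
    by_cases hx1 : x.1 = i₀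
    · refine ⟨φ i₀ w.head * (hx1 ▸ x.2), l',
        ⟨fun y hy => hred.1 y (List.mem_cons_of_mem _ hy), hred.2.tail⟩, ?_, ?_⟩
      · intro y hy
        rcases hl' : l' with _ | ⟨z, l''⟩
        · simp [hl'] at hy
        · rw [hl'] at hred
          simp only [hl', List.head?_cons, Option.mem_some_iff] at hy
          subst hy
          have := (List.isChain_cons_cons.1 hred.2).1
          rw [hx1] at this
          exact this.symm
      · rw [hprod, lprod_cons, map_mul, of_apply_eq_base, of_heq x hx1, mul_assoc]
    · refine ⟨φ i₀ w.head, x :: l', hred, ?_, by rw [hprod, of_apply_eq_base]⟩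
      intro y hy
      simp only [List.head?_cons, Option.mem_some_iff] at hy
      subst hy
      exact hx1

theorem cast_snd_notin {i₀ : ι} {x : Σ i, G i} (h : x.1 = i₀) (hx : x.2 ∉ (φ x.1).range) :
    (h ▸ x.2) ∉ (φ i₀).range := by
  rcases x with ⟨k, g⟩
  dsimp at h
  subst h
  exact hx

theorem key_ne (hφ : ∀ i, Function.Injective (φ i)) {i₀ : ι} {l : List (Σ i, G i)}
    (hred : Red φ l) (hne : l ≠ []) (hhd : ∀ x ∈ l.head?, x.1 ≠ i₀)
    {a : G i₀} (ha : a ∉ (φ i₀).range) (b : G i₀) :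
    of i₀ a * lprod φ l ≠ lprod φ l * of i₀ b := by
  intro heq
  have hredL : Red φ (⟨i₀, a⟩ :: l) := by
    refine ⟨?_, List.isChain_cons.2 ⟨fun y hy => (hhd y hy).symm, hred.2⟩⟩
    intro x hx
    rcases List.mem_cons.1 hx with rfl | hx
    · exact ha
    · exact hred.1 x hx
  have hL : lprod φ (⟨i₀, a⟩ :: l) = of i₀ a * lprod φ l := lprod_cons _ _
  rw [← hL] at heq
  set x := l.getLast hne with hxdef
  have hsplit : l.dropLast ++ [x] = l := List.dropLast_append_getLast hne
  set l₀ := l.dropLast with hl₀def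
  have hxl : x ∈ l := List.getLast_mem hne
  have hlen0 : l.length = l₀.length + 1 := by
    conv_lhs => rw [← hsplit]
    simp
  have hmem0 : ∀ y ∈ l₀, y.2 ∉ (φ y.1).range := fun y hy =>
    hred.1 y (List.dropLast_subset l hy)
  have hchain0 : l₀.Chain' (fun a b => a.1 ≠ b.1) := by
    have h2 := hred.2
    rw [← hsplit] at h2
    exact (List.isChain_append.1 h2).1
  have hred0 : Red φ l₀ := ⟨hmem0, hchain0⟩
  by_cases hb : b ∈ (φ i₀).range
  · -- b in base range: absorb into last letter
    obtain ⟨hb', rfl⟩ := hb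
    have hR : lprod φ l * of i₀ (φ i₀ hb') = lprod φ (l₀ ++ [⟨x.1, x.2 * φ x.1 hb'⟩]) := by
      conv_lhs => rw [← hsplit]
      rw [lprod_concat, lprod_concat, map_mul, of_apply_eq_base φ x.1, of_apply_eq_base φ i₀,
        mul_assoc]
    rw [hR] at heq
    have hred' : Red φ (l₀ ++ [⟨x.1, x.2 * φ x.1 hb'⟩]) := by
      refine red_of_fst_eq hred ?_ ?_
      · intro y hy
        rcases List.mem_append.1 hy with hy | hy
        · exact hmem0 y hy
        · simp only [List.mem_singleton] at hy
          subst hy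
          intro hmem
          exact hred.1 x hxl ((mul_mem_cancel_right (MonoidHom.mem_range.2 ⟨hb', rfl⟩)).1 hmem)
      · conv_rhs => rw [← hsplit]
        simp
    have hidx := indices_eq hφ hredL hred' heq
    have hll := congrArg List.length hidx
    simp only [List.length_map, List.length_cons, List.length_append] at hll
    simp only [List.length_cons, List.length_nil] at hll
    omega
  · by_cases hlast : x.1 = i₀
    · -- last letter has index i₀
      have hx : of (φ := φ) x.1 x.2 = of i₀ (hlast ▸ x.2) := of_heq x hlast
      set u : G i₀ := hlast ▸ x.2 with hudef
      have hu : u ∉ (φ i₀).range := cast_snd_notin hlast (hred.1 x hxl)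
      have hR : lprod φ l * of i₀ b = lprod φ l₀ * of i₀ (u * b) := by
        conv_lhs => rw [← hsplit]
        rw [lprod_concat, hx, mul_assoc, ← map_mul]
      rw [hR] at heq
      have hl₀ne : l₀ ≠ [] := by
        intro h0
        have hxx : l = [x] := by rw [← hsplit, h0]; rfl
        apply hhd x _ hlast
        rw [hxx]
        rfl
      by_cases hub : u * b ∈ (φ i₀).range
      · -- absorb base into last letter of l₀
        obtain ⟨hc, hceq⟩ := hub
        set y := l₀.getLast hl₀ne with hydef
        have hsplit0 : l₀.dropLast ++ [y] = l₀ := List.dropLast_append_getLast hl₀ne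
        have hR2 : lprod φ l₀ * of i₀ (u * b) =
            lprod φ (l₀.dropLast ++ [⟨y.1, y.2 * φ y.1 hc⟩]) := by
          conv_lhs => rw [← hsplit0]
          rw [lprod_concat, lprod_concat, ← hceq, map_mul, of_apply_eq_base φ y.1,
            of_apply_eq_base φ i₀, mul_assoc]
        rw [hR2] at heq
        have hred' : Red φ (l₀.dropLast ++ [⟨y.1, y.2 * φ y.1 hc⟩]) := by
          refine red_of_fst_eq hred0 ?_ ?_
          · intro z hz
            rcases List.mem_append.1 hz with hz | hz
            · exact hmem0 z (List.dropLast_subset l₀ hz)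
            · simp only [List.mem_singleton] at hz
              subst hz
              intro hmem
              exact hmem0 y (List.getLast_mem hl₀ne) ((mul_mem_cancel_right (MonoidHom.mem_range.2 ⟨hc, rfl⟩)).1 hmem)
          · conv_rhs => rw [← hsplit0]
            simp
        have hidx := indices_eq hφ hredL hred' heq
        have hll := congrArg List.length hidx
        have hlen1 : l₀.length = l₀.dropLast.length + 1 := by
          conv_lhs => rw [← hsplit0]
          simp
        simp only [List.length_map, List.length_cons, List.length_append,
          List.length_nil] at hll
        omega
      · by_cases hub1 : u * b = 1
        · have hR2 : lprod φ l₀ * of i₀ (u * b) = lprod φ l₀ := by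
            rw [hub1, map_one, mul_one]
          rw [hR2] at heq
          have hidx := indices_eq hφ hredL hred0 heq
          have hll := congrArg List.length hidx
          simp only [List.length_map, List.length_cons] at hll
          omega
        · have hR2 : lprod φ l₀ * of i₀ (u * b) = lprod φ (l₀ ++ [⟨i₀, u * b⟩]) := by
            rw [lprod_concat]
          rw [hR2] at heq
          have hred' : Red φ (l₀ ++ [⟨i₀, u * b⟩]) := by
            refine red_of_fst_eq hred ?_ ?_
            · intro z hz
              rcases List.mem_append.1 hz with hz | hz
              · exact hmem0 z hz
              · simp only [List.mem_singleton] at hz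
                subst hz
                exact hub
            · conv_rhs => rw [← hsplit]
              simp [hlast]
          have hidx := indices_eq hφ hredL hred' heq
          have hll := congrArg List.length hidx
          simp only [List.length_map, List.length_cons, List.length_append,
            List.length_nil] at hll
          omega
    · -- last letter has index ≠ i₀ : append
      have hR : lprod φ l * of i₀ b = lprod φ (l ++ [⟨i₀, b⟩]) := by
        rw [lprod_concat]
      rw [hR] at heq
      have hred' : Red φ (l ++ [⟨i₀, b⟩]) := by
        constructor
        · intro y hy
          rcases List.mem_append.1 hy with hy | hy
          · exact hred.1 y hy
          · simp only [List.mem_singleton] at hy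
            subst hy
            exact hb
        · apply List.isChain_append.2
          refine ⟨hred.2, List.isChain_singleton _, ?_⟩
          intro z hz y' hy'
          simp only [List.head?_cons, Option.mem_some_iff] at hy'
          subst hy'
          rw [List.getLast?_eq_getLast hne, Option.mem_some_iff] at hz
          subst hz
          exact hlast
      have hidx := indices_eq hφ hredL hred' heq
      rcases l with _ | ⟨z, l₁⟩
      · exact hne rfl
      · simp only [List.map_cons, List.map_append] at hidx
        have hzi : i₀ = z.1 := by
          have hh := congrArg List.head? hidx
          simpa using hh
        exact hhd z rfl hzi.symm

theorem key_lemma (hφ : ∀ i, Function.Injective (φ i)) (i₀ : ι) (p : PushoutI φ)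
    (a b : G i₀) (hab : of i₀ a * p = p * of i₀ b) :
    (∃ y : G i₀, p = of i₀ y) ∨ ∃ c : PushoutI φ, c⁻¹ * of i₀ a * c ∈ (base φ).range := by
  obtain ⟨a₀, l, hred, hhd, rfl⟩ := exists_decomp hφ i₀ p
  rcases eq_or_ne l [] with rfl | hne
  · exact Or.inl ⟨a₀, by simp⟩
  · have heq : of i₀ (a₀⁻¹ * a * a₀) * lprod φ l = lprod φ l * of i₀ b := by
      have h2 := congrArg (fun z => (of (φ := φ) i₀ a₀)⁻¹ * z) hab
      rw [map_mul, map_mul, map_inv]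
      simpa [mul_assoc] using h2
    by_cases ha' : a₀⁻¹ * a * a₀ ∈ (φ i₀).range
    · obtain ⟨h', hh'⟩ := ha'
      refine Or.inr ⟨of i₀ a₀, MonoidHom.mem_range.2 ⟨h', ?_⟩⟩
      rw [← of_apply_eq_base, hh']
      simp [map_mul, mul_assoc]
    · exact absurd heq (key_ne hφ hred hne (fun x hx => hhd x hx) ha' b)

end Pushout
section GP

/-- general version of `grels` over an arbitrary vertex type -/
def grels' {ι : Type} (G : SimpleGraph ι) (m : ι → ℕ) : Set (FreeGroup ι) :=
  {r | (∃ i, r = FreeGroup.of i ^ m i) ∨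
    ∃ i j, G.Adj i j ∧
      r = FreeGroup.of i * FreeGroup.of j * (FreeGroup.of i)⁻¹ * (FreeGroup.of j)⁻¹}

variable {ι : Type} (G : SimpleGraph ι) (m : ι → ℕ)

theorem grels'_lift {K : Type*} [Group K] {f : ι → K} (h1 : ∀ i, f i ^ m i = 1)
    (h2 : ∀ i j, G.Adj i j → Commute (f i) (f j)) :
    ∀ r ∈ grels' G m, FreeGroup.lift f r = 1 := by
  rintro r (⟨i, rfl⟩ | ⟨i, j, hij, rfl⟩)
  · rw [map_pow, FreeGroup.lift_apply_of, h1]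
  · simp only [map_mul, map_inv, FreeGroup.lift_apply_of]
    exact commutatorElement_eq_one_iff_commute.2 (h2 i j hij)

/-- homomorphism out of a graph product -/
def gpHom {K : Type*} [Group K] (f : ι → K) (h1 : ∀ i, f i ^ m i = 1)
    (h2 : ∀ i j, G.Adj i j → Commute (f i) (f j)) :
    PresentedGroup (grels' G m) →* K :=
  PresentedGroup.toGroup (grels'_lift G m h1 h2)

@[simp] theorem gpHom_of {K : Type*} [Group K] (f : ι → K) (h1 : ∀ i, f i ^ m i = 1)
    (h2 : ∀ i j, G.Adj i j → Commute (f i) (f j)) (i : ι) :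
    gpHom G m f h1 h2 (PresentedGroup.of i) = f i :=
  PresentedGroup.toGroup.of _

theorem gp_rel_eq_one {r : FreeGroup ι} (hr : r ∈ grels' G m) :
    (PresentedGroup.mk (grels' G m) r) = 1 :=
  (QuotientGroup.eq_one_iff _).2 (Subgroup.subset_normalClosure hr)

theorem gp_of_pow (i : ι) : (PresentedGroup.of i : PresentedGroup (grels' G m)) ^ m i = 1 := by
  have h := gp_rel_eq_one G m (Or.inl ⟨i, rfl⟩)
  rw [map_pow] at h
  exact h

theorem gp_commute {i j : ι} (h : G.Adj i j) :
    Commute (PresentedGroup.of i : PresentedGroup (grels' G m)) (PresentedGroup.of j) := by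
  apply commutatorElement_eq_one_iff_commute.1
  have h2 := gp_rel_eq_one G m (Or.inr ⟨i, j, h, rfl⟩)
  simpa [map_mul, commutatorElement_def, PresentedGroup.of] using h2

/-- induced graph on a subtype -/
def Gsub (p : ι → Prop) : SimpleGraph (Subtype p) := G.comap (Subtype.val)

def msub (p : ι → Prop) : Subtype p → ℕ := fun s => m s.val

/-- the special subgroup of a graph product, as a graph product -/
abbrev GPsub (p : ι → Prop) := PresentedGroup (grels' (Gsub G p) (msub m p))

/-- inclusion between special subgroups -/
def inclHom {p q : ι → Prop} (hpq : ∀ i, p i → q i) : GPsub G m p →* GPsub G m q :=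
  gpHom _ _ (fun s => PresentedGroup.of ⟨s.1, hpq _ s.2⟩)
    (fun s => gp_of_pow _ _ _) (fun s₁ s₂ h => gp_commute _ _ h)

@[simp] theorem inclHom_of {p q : ι → Prop} (hpq : ∀ i, p i → q i) (s : Subtype p) :
    inclHom G m hpq (PresentedGroup.of s) = PresentedGroup.of ⟨s.1, hpq _ s.2⟩ :=
  gpHom_of _ _ _ _ _ _

/-- inclusion of a special subgroup into the whole graph product -/
def inclTop (p : ι → Prop) : GPsub G m p →* PresentedGroup (grels' G m) :=
  gpHom _ _ (fun s => PresentedGroup.of s.1)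
    (fun s => gp_of_pow _ _ _) (fun s₁ s₂ h => gp_commute _ _ h)

@[simp] theorem inclTop_of (p : ι → Prop) (s : Subtype p) :
    inclTop G m p (PresentedGroup.of s) = PresentedGroup.of s.1 :=
  gpHom_of _ _ _ _ _ _

/-- retraction of special subgroups -/
def retrHom {p q : ι → Prop} [DecidablePred p] (hpq : ∀ i, p i → q i) :
    GPsub G m q →* GPsub G m p :=
  gpHom _ _ (fun s => if h : p s.1 then PresentedGroup.of ⟨s.1, h⟩ else 1)
    (fun s => by
      split
      · exact gp_of_pow _ _ _
      · exact one_pow _)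
    (fun s₁ s₂ h => by
      split
      · split
        · exact gp_commute _ _ h
        · exact Commute.one_right _
      · exact Commute.one_left _)

theorem retr_incl {p q : ι → Prop} [DecidablePred p] (hpq : ∀ i, p i → q i) (x : GPsub G m p) :
    retrHom G m hpq (inclHom G m hpq x) = x := by
  have : (retrHom G m hpq).comp (inclHom G m hpq) = MonoidHom.id _ := by
    apply PresentedGroup.ext
    intro s
    simp [retrHom, gpHom_of, dif_pos s.2]
  exact DFunLike.congr_fun this x

theorem inclHom_injective {p q : ι → Prop} (hpq : ∀ i, p i → q i) :
    Function.Injective (inclHom G m hpq) := by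
  classical
  exact Function.LeftInverse.injective (retr_incl G m hpq)

end GP

section Decomp

open Monoid.PushoutI

variable {ι : Type} (G : SimpleGraph ι) (m : ι → ℕ) (t : ι)

def pst : ι → Prop := fun i => i = t ∨ G.Adj t i
def plk : ι → Prop := fun i => G.Adj t i
def pdel : ι → Prop := fun i => i ≠ t

theorem plk_pst : ∀ i, plk G t i → pst G t i := fun _ h => Or.inr h
theorem plk_pdel : ∀ i, plk G t i → pdel t i := fun _ h => (G.ne_of_adj h).symm

@[reducible] def Fam : Bool → Type
  | true => GPsub G m (pst G t)
  | false => GPsub G m (pdel t)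

instance FamGroup : ∀ b, Group (Fam G m t b)
  | true => inferInstanceAs (Group (GPsub G m (pst G t)))
  | false => inferInstanceAs (Group (GPsub G m (pdel t)))

def φfam : ∀ b, GPsub G m (plk G t) →* Fam G m t b
  | true => inclHom G m (plk_pst G t)
  | false => inclHom G m (plk_pdel G t)

theorem hφfam : ∀ b, Function.Injective (φfam G m t b) := by
  intro b
  cases b
  · exact inclHom_injective G m (plk_pdel G t)
  · exact inclHom_injective G m (plk_pst G t)

abbrev Pu := PushoutI (φfam G m t)

variable [DecidablePred (pst G t)]

/-- images of generators in the pushout -/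
def fgen (i : ι) : Pu G m t :=
  if h : pst G t i then PushoutI.of (φ := φfam G m t) true (PresentedGroup.of ⟨i, h⟩)
  else PushoutI.of (φ := φfam G m t) false (PresentedGroup.of ⟨i, fun h' => h (Or.inl h')⟩)

theorem fgen_lk (i : ι) (h : plk G t i) :
    fgen G m t i = PushoutI.of (φ := φfam G m t) false
      (PresentedGroup.of ⟨i, plk_pdel G t i h⟩) := by
  have h1 : fgen G m t i = PushoutI.of (φ := φfam G m t) true (PresentedGroup.of ⟨i, Or.inr h⟩) :=
    dif_pos (Or.inr h)
  have h2 : (PresentedGroup.of (⟨i, Or.inr h⟩ : Subtype (pst G t)) : GPsub G m (pst G t)) =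
      φfam G m t true (PresentedGroup.of ⟨i, h⟩) := by
    show _ = inclHom G m (plk_pst G t) _
    rw [inclHom_of]
  have h3 : (PresentedGroup.of (⟨i, plk_pdel G t i h⟩ : Subtype (pdel t)) :
      GPsub G m (pdel t)) = φfam G m t false (PresentedGroup.of ⟨i, h⟩) := by
    show _ = inclHom G m (plk_pdel G t) _
    rw [inclHom_of]
  rw [h1, h2, h3, of_apply_eq_base, of_apply_eq_base]

theorem fgen_pdel (i : ι) (h : i ≠ t) :
    fgen G m t i = PushoutI.of (φ := φfam G m t) false (PresentedGroup.of ⟨i, h⟩) := by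
  by_cases hp : pst G t i
  · rcases hp with rfl | hp
    · exact absurd rfl h
    · rw [fgen_lk G m t i hp]
  · rw [fgen, dif_neg hp]

theorem fgen_pow (i : ι) : fgen G m t i ^ m i = 1 := by
  rw [fgen]
  split
  · next h =>
    have h0 : (PresentedGroup.of ⟨i, h⟩ : GPsub G m (pst G t)) ^ m i = 1 :=
      gp_of_pow (Gsub G (pst G t)) (msub m (pst G t)) ⟨i, h⟩
    rw [← map_pow, h0, map_one]
  · next h =>
    have h0 : (PresentedGroup.of ⟨i, fun h' => h (Or.inl h')⟩ : GPsub G m (pdel t)) ^ m i = 1 :=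
      gp_of_pow (Gsub G (pdel t)) (msub m (pdel t)) ⟨i, fun h' => h (Or.inl h')⟩
    rw [← map_pow, h0, map_one]

theorem fgen_commute (i j : ι) (hadj : G.Adj i j) : Commute (fgen G m t i) (fgen G m t j) := by
  by_cases hi : pst G t i <;> by_cases hj : pst G t j
  · rw [fgen, dif_pos hi, fgen, dif_pos hj]
    exact (gp_commute (Gsub G (pst G t)) (msub m (pst G t)) (by exact hadj)).map _
  · -- i in star, j not
    have hlk : plk G t i := by
      rcases hi with rfl | hi
      · exact absurd (Or.inr hadj) hj
      · exact hi
    rw [fgen_lk G m t i hlk, fgen, dif_neg hj]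
    exact (gp_commute (Gsub G (pdel t)) (msub m (pdel t)) (by exact hadj)).map _
  · have hlk : plk G t j := by
      rcases hj with rfl | hj
      · exact absurd (Or.inr hadj.symm) hi
      · exact hj
    rw [fgen_lk G m t j hlk, fgen, dif_neg hi]
    exact (gp_commute (Gsub G (pdel t)) (msub m (pdel t)) (by exact hadj)).map _
  · rw [fgen, dif_neg hi, fgen, dif_neg hj]
    exact (gp_commute (Gsub G (pdel t)) (msub m (pdel t)) (by exact hadj)).map _

def eHom : PresentedGroup (grels' G m) →* Pu G m t :=
  gpHom G m (fgen G m t) (fgen_pow G m t) (fgen_commute G m t)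

@[simp] theorem eHom_of (i : ι) : eHom G m t (PresentedGroup.of i) = fgen G m t i :=
  gpHom_of _ _ _ _ _ _

def inclFam : ∀ b, Fam G m t b →* PresentedGroup (grels' G m)
  | true => inclTop G m (pst G t)
  | false => inclTop G m (pdel t)

theorem inclFam_comp : ∀ b, (inclFam G m t b).comp (φfam G m t b) = inclTop G m (plk G t) := by
  intro b
  cases b
  · apply PresentedGroup.ext
    intro s
    show inclTop G m (pdel t) (inclHom G m (plk_pdel G t) (PresentedGroup.of s)) =
      inclTop G m (plk G t) (PresentedGroup.of s)
    rw [inclHom_of, inclTop_of, inclTop_of]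
  · apply PresentedGroup.ext
    intro s
    show inclTop G m (pst G t) (inclHom G m (plk_pst G t) (PresentedGroup.of s)) =
      inclTop G m (plk G t) (PresentedGroup.of s)
    rw [inclHom_of, inclTop_of, inclTop_of]

def gHom : Pu G m t →* PresentedGroup (grels' G m) :=
  PushoutI.lift (inclFam G m t) (inclTop G m (plk G t)) (inclFam_comp G m t)

theorem gHom_eHom (x : PresentedGroup (grels' G m)) : gHom G m t (eHom G m t x) = x := by
  have hc : (gHom G m t).comp (eHom G m t) = MonoidHom.id _ := by
    apply PresentedGroup.ext
    intro i
    show gHom G m t (eHom G m t (PresentedGroup.of i)) = PresentedGroup.of i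
    rw [eHom_of, fgen]
    split
    · rw [gHom, PushoutI.lift_of]
      show inclTop G m _ _ = _
      rw [inclTop_of]
    · rw [gHom, PushoutI.lift_of]
      show inclTop G m _ _ = _
      rw [inclTop_of]
  exact DFunLike.congr_fun hc x

theorem eHom_gHom (y : Pu G m t) : eHom G m t (gHom G m t y) = y := by
  have hc : (eHom G m t).comp (gHom G m t) = MonoidHom.id _ := by
    apply PushoutI.hom_ext_nonempty
    intro b
    cases b
    · -- false component
      apply PresentedGroup.ext
      intro s
      show eHom G m t (gHom G m t (PushoutI.of false (PresentedGroup.of s))) = _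
      rw [gHom, PushoutI.lift_of]
      show eHom G m t (inclTop G m _ _) = _
      rw [inclTop_of, eHom_of, fgen_pdel G m t s.1 s.2]
      rfl
    · apply PresentedGroup.ext
      intro s
      show eHom G m t (gHom G m t (PushoutI.of true (PresentedGroup.of s))) = _
      rw [gHom, PushoutI.lift_of]
      show eHom G m t (inclTop G m _ _) = _
      rw [inclTop_of, eHom_of, fgen, dif_pos s.2]
      rfl
  exact DFunLike.congr_fun hc y

end Decomp

section Main

variable {ι : Type} (G : SimpleGraph ι) (m : ι → ℕ)

/-- retraction onto the cyclic group at a vertex -/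
def rho (j : ι) [DecidableEq ι] : PresentedGroup (grels' G m) →* Multiplicative (ZMod (m j)) :=
  gpHom G m (fun i => if i = j then Multiplicative.ofAdd (1 : ZMod (m j)) else 1)
    (fun i => by
      split
      · next h =>
        subst h
        rw [← ofAdd_nsmul, nsmul_eq_mul, mul_one, ZMod.natCast_self, ofAdd_zero]
      · exact one_pow _)
    (fun i j h => Commute.all _ _)


theorem rho_of_self (j : ι) [DecidableEq ι] :
    rho G m j (PresentedGroup.of j) = Multiplicative.ofAdd (1 : ZMod (m j)) := by
  rw [rho, gpHom_of, if_pos rfl]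

theorem rho_of_ne (j i : ι) [DecidableEq ι] (h : i ≠ j) :
    rho G m j (PresentedGroup.of i) = 1 := by
  rw [rho, gpHom_of, if_neg h]

theorem zmod_one_ne_one {n : ℕ} (hm : n = 0 ∨ IsPrimePow n) :
    Multiplicative.ofAdd (1 : ZMod n) ≠ 1 := by
  intro h
  rw [show (1 : Multiplicative (ZMod n)) = Multiplicative.ofAdd (0 : ZMod n) from rfl] at h
  have h10 : (1 : ZMod n) = 0 := Multiplicative.ofAdd.injective h
  rcases hm with rfl | hpp
  · exact one_ne_zero h10
  · haveI : Fact (1 < n) := ⟨hpp.one_lt⟩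
    exact one_ne_zero h10

theorem star_le_centralizer (j : ι) :
    closure {x : PresentedGroup (grels' G m) | ∃ k, (k = j ∨ G.Adj j k) ∧ x = PresentedGroup.of k}
      ≤ centralizer {PresentedGroup.of j} := by
  rw [closure_le]
  rintro x ⟨k, hk, rfl⟩
  rw [SetLike.mem_coe, mem_centralizer_iff]
  rintro y hy
  rw [Set.mem_singleton_iff] at hy
  subst hy
  rcases hk with rfl | hk
  · rfl
  · exact (gp_commute G m hk).eq

theorem gen_main : ∀ (n : ℕ) (ι : Type) (_ : Fintype ι) (G : SimpleGraph ι) (m : ι → ℕ),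
    Fintype.card ι ≤ n → (∀ i, m i = 0 ∨ IsPrimePow (m i)) → ∀ j : ι,
    centralizer {(PresentedGroup.of j : PresentedGroup (grels' G m))} =
      closure {x | ∃ k, (k = j ∨ G.Adj j k) ∧ x = PresentedGroup.of k} := by
  intro n
  induction n with
  | zero =>
    intro ι hF G m hcard hm j
    exact absurd (@Fintype.card_pos_iff ι hF |>.2 ⟨j⟩) (by omega)
  | succ n ih =>
    intro ι hF G m hcard hm j
    classical
    by_cases hstar : ∀ k, k = j ∨ G.Adj j k
    · apply le_antisymm
      · have htop : closure {x : PresentedGroup (grels' G m) |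
            ∃ k, (k = j ∨ G.Adj j k) ∧ x = PresentedGroup.of k} = ⊤ := by
          rw [eq_top_iff, ← PresentedGroup.closure_range_of (grels' G m)]
          apply Subgroup.closure_mono
          rintro _ ⟨k, rfl⟩
          exact ⟨k, hstar k, rfl⟩
        rw [htop]
        exact le_top
      · exact star_le_centralizer G m j
    · push_neg at hstar
      obtain ⟨t, ht1, ht2⟩ := hstar
      apply le_antisymm
      swap
      · exact star_le_centralizer G m j
      intro x hx
      have hxe : PresentedGroup.of j * x = x * PresentedGroup.of j :=
        mem_centralizer_iff.1 hx _ (Set.mem_singleton _)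
      -- move to the pushout
      have hjt : j ≠ t := fun h => ht1 h.symm
      have hjpst : ¬ pst G t j := by
        rintro (h | h)
        · exact ht1 h.symm
        · exact ht2 h.symm
      have hej : eHom G m t (PresentedGroup.of j) =
          PushoutI.of (φ := φfam G m t) false (PresentedGroup.of ⟨j, hjt⟩) := by
        rw [eHom_of, fgen_pdel G m t j hjt]
      set aj : GPsub G m (pdel t) := PresentedGroup.of ⟨j, hjt⟩ with haj
      set X := eHom G m t x with hX
      have hXc : PushoutI.of (φ := φfam G m t) false aj * X =
          X * PushoutI.of (φ := φfam G m t) false aj := by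
        rw [← hej, hX, ← map_mul, ← map_mul, hxe]
      rcases key_lemma (hφfam G m t) false X aj aj hXc with ⟨y, hy⟩ | ⟨c, z, hz⟩
      · -- X is in the subgroup of the deleted graph
        have hyc : aj * y = y * aj := by
          apply Monoid.PushoutI.of_injective (hφfam G m t) false
          rw [map_mul, map_mul, ← hy, hXc]
        have hycent : y ∈ centralizer {(PresentedGroup.of (⟨j, hjt⟩ : Subtype (pdel t)) :
            GPsub G m (pdel t))} := by
          rw [mem_centralizer_iff]
          rintro w hw
          rw [Set.mem_singleton_iff] at hw
          subst hw
          exact hyc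
        have hcard' : Fintype.card (Subtype (pdel t)) ≤ n :=
          Nat.lt_succ_iff.mp (lt_of_lt_of_le
            (Fintype.card_subtype_lt (p := pdel t) (x := t) (by simp [pdel])) hcard)
        rw [ih (Subtype (pdel t)) inferInstance (Gsub G (pdel t)) (msub m (pdel t)) hcard'
          (fun s => hm s.1) ⟨j, hjt⟩] at hycent
        -- now push forward
        have hxval : x = inclTop G m (pdel t) y := by
          have hge := gHom_eHom G m t x
          rw [← hX] at hge
          rw [← hge, hy]
          rw [gHom, PushoutI.lift_of]
          rfl
        rw [hxval]
        have himg := Subgroup.mem_map_of_mem (inclTop G m (pdel t)) hycent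
        rw [MonoidHom.map_closure] at himg
        refine closure_mono ?_ himg
        rintro _ ⟨w, ⟨k, hk, rfl⟩, rfl⟩
        rw [inclTop_of]
        refine ⟨k.1, ?_, rfl⟩
        rcases hk with rfl | hk
        · exact Or.inl rfl
        · exact Or.inr hk
      · -- conjugate into the link: contradiction with rho
        exfalso
        have hgz := congrArg (gHom G m t) hz.symm
        rw [map_mul, map_mul, map_inv] at hgz
        have hgaj : gHom G m t (PushoutI.of (φ := φfam G m t) false aj) =
            PresentedGroup.of j := by
          rw [gHom, PushoutI.lift_of]
          show inclTop G m (pdel t) aj = _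
          rw [haj, inclTop_of]
        have hbase : gHom G m t (Monoid.PushoutI.base (φfam G m t) z) =
            inclTop G m (plk G t) z := by
          rw [gHom, PushoutI.lift_base]
        rw [hgaj, hbase] at hgz
        set w := gHom G m t c with hwdef
        -- apply rho
        have hrho := congrArg (rho G m j) hgz
        rw [map_mul, map_mul, map_inv, rho_of_self] at hrho
        have hlk1 : rho G m j (inclTop G m (plk G t) z) = 1 := by
          have hcomp : (rho G m j).comp (inclTop G m (plk G t)) = 1 := by
            apply PresentedGroup.ext
            intro s
            show rho G m j (inclTop G m (plk G t) (PresentedGroup.of s)) = 1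
            rw [inclTop_of]
            exact rho_of_ne G m j s.1 (fun h => ht2 (h ▸ s.2).symm)
          exact DFunLike.congr_fun hcomp z
        rw [hlk1] at hrho
        have hfin : Multiplicative.ofAdd (1 : ZMod (m j)) = 1 := by
          have h2 : Multiplicative.ofAdd (1 : ZMod (m j)) =
              (rho G m j w) * 1 * (rho G m j w)⁻¹ := by
            rw [← hrho]
            group
          simpa using h2
        exact zmod_one_ne_one (hm j) hfin


end Main

end GPAux

/-- Defining relations of the graph product of cyclic groups `W(Γ, m)`.
`m i = 0` encodes infinite order (and gives the trivial relation). -/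
def grels {N : ℕ} (G : SimpleGraph (Fin N)) (m : Fin N → ℕ) : Set (FreeGroup (Fin N)) :=
  {r | (∃ i, r = FreeGroup.of i ^ m i) ∨
    ∃ i j, G.Adj i j ∧
      r = FreeGroup.of i * FreeGroup.of j * (FreeGroup.of i)⁻¹ * (FreeGroup.of j)⁻¹}

theorem stmt10 {N : ℕ} (G : SimpleGraph (Fin N)) (m : Fin N → ℕ)
    (hm : ∀ i, m i = 0 ∨ IsPrimePow (m i)) (j : Fin N) :
    Subgroup.centralizer {(PresentedGroup.of j : PresentedGroup (grels G m))} =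
      Subgroup.closure
        {x : PresentedGroup (grels G m) |
          ∃ k : Fin N, (k = j ∨ G.Adj j k) ∧ x = PresentedGroup.of k} := by
  exact GPAux.gen_main (Fintype.card (Fin N)) (Fin N) inferInstance G m le_rfl hm j
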